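/- Let α ≥ 1, β > 1 and let positive constants c11, c12, c13, c14, c31, c32 and N ≥ 1 be given. Let V be a countable set, d : V × V → [0,∞) a function, θ : V → [0,∞) a weight, and fix x ∈ V. Assume: (i) c31·r^α ≤ θ(B(x,r)) ≤ c32·r^α for all r ≥ N; (ii) q : (0,∞) × V → [0,∞) satisfies, for all t ≥ N and all y ∈ V, q(t,y) ≤ (c11/t^{α/β})·exp(−c12·(d(x,y)^β/t)^{1/(β−1)}) whenever t ≥ d(x,y), and q(t,y) ≤ c13·exp(−c14·d(x,y)·max(1, log(d(x,y)/t))) whenever t ≤ d(x,y); (iii) ∑_{y∈V} q(t,y)·θ(y) ≤ 1 for all t ≥ N. Then for every δ ∈ (0, min(c12, c14)) there exist positive constants c1, c2, c3, depending only on δ, α, β and the given constants (not on t, r), such that ∑_{y : d(x,y) ≥ r} q(t,y)·θ(y) ≤ c1·exp(−(c12−δ)·(r/t^{1/β})^{β/(β−1)}) + c2·exp(−c3·t) for all r ≥ N and t ≥ N. -/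

import Mathlib

open Set ENNReal
private lemma aux_pow_le_exp (p ε : ℝ) (hp : 0 ≤ p) (hε : 0 < ε) :
    ∃ K : ℝ, 1 ≤ K ∧ ∀ x : ℝ, 0 ≤ x → x ^ p ≤ K * Real.exp (ε * x) := by
  refine ⟨1 + (Nat.factorial ⌈p⌉₊) / ε ^ ⌈p⌉₊, le_add_of_nonneg_right (by positivity), fun x hx => ?_⟩
  have hexp : (0:ℝ) < Real.exp (ε * x) := Real.exp_pos _
  have h1exp : 1 ≤ Real.exp (ε * x) := Real.one_le_exp (by positivity)
  have hfac : (0:ℝ) < (Nat.factorial ⌈p⌉₊) / ε ^ ⌈p⌉₊ := by positivity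
  rcases le_total x 1 with h1 | h1
  · have hx1 : x ^ p ≤ 1 := Real.rpow_le_one hx h1 hp
    nlinarith
  · have h2 : x ^ p ≤ x ^ (⌈p⌉₊ : ℝ) := Real.rpow_le_rpow_of_exponent_le h1 (Nat.le_ceil p)
    rw [Real.rpow_natCast] at h2
    have h3 : (ε * x) ^ ⌈p⌉₊ / (Nat.factorial ⌈p⌉₊) ≤ Real.exp (ε * x) :=
      Real.pow_div_factorial_le_exp _ (by positivity) _
    have hfct : (0:ℝ) < ((Nat.factorial ⌈p⌉₊) : ℝ) := by positivity
    have h4 : x ^ ⌈p⌉₊ ≤ (Nat.factorial ⌈p⌉₊) / ε ^ ⌈p⌉₊ * Real.exp (ε * x) := by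
      rw [div_mul_eq_mul_div, le_div_iff₀ (by positivity)]
      calc x ^ ⌈p⌉₊ * ε ^ ⌈p⌉₊ = (ε * x) ^ ⌈p⌉₊ := by rw [mul_pow]; ring
        _ ≤ ((Nat.factorial ⌈p⌉₊) : ℝ) * Real.exp (ε * x) := by
            rw [div_le_iff₀ hfct] at h3; linarith
    calc x ^ p ≤ x ^ ⌈p⌉₊ := h2
      _ ≤ (Nat.factorial ⌈p⌉₊) / ε ^ ⌈p⌉₊ * Real.exp (ε * x) := h4
      _ ≤ (1 + (Nat.factorial ⌈p⌉₊) / ε ^ ⌈p⌉₊) * Real.exp (ε * x) := by nlinarith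

private lemma aux_annulus {V : Type*} (dd : V → ℝ) (θ : V → ℝ)
    (u : ℕ → ℝ) (hu : ∀ y, ∃ j, dd y ≤ u j)
    (G : V → ℝ≥0∞) (b : ℕ → ℝ≥0∞)
    (hG : ∀ (y : V) (j : ℕ), dd y ≤ u j → (∀ i, i < j → ¬ dd y ≤ u i) →
      G y ≤ b j * ENNReal.ofReal (θ y)) :
    (∑' y : V, G y) ≤ ∑' j : ℕ, b j * ∑' z : {z : V // dd z ≤ u j}, ENNReal.ofReal (θ z.1) := by
  classical
  have key : ∀ y : V, G y ≤ ∑' j : ℕ, Set.indicator {z : V | Nat.find (hu z) = j}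
      (fun z => b j * ENNReal.ofReal (θ z)) y := by
    intro y
    have h1 : G y ≤ b (Nat.find (hu y)) * ENNReal.ofReal (θ y) :=
      hG y _ (Nat.find_spec (hu y)) (fun i hi => Nat.find_min (hu y) hi)
    refine h1.trans (le_trans (le_of_eq ?_) (ENNReal.le_tsum (Nat.find (hu y))))
    rw [Set.indicator_of_mem (show y ∈ {z : V | Nat.find (hu z) = Nat.find (hu y)} from rfl)]
  calc (∑' y : V, G y)
      ≤ ∑' (y : V) (j : ℕ), Set.indicator {z : V | Nat.find (hu z) = j}
          (fun z => b j * ENNReal.ofReal (θ z)) y := ENNReal.tsum_le_tsum key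
    _ = ∑' (j : ℕ) (y : V), Set.indicator {z : V | Nat.find (hu z) = j}
          (fun z => b j * ENNReal.ofReal (θ z)) y := ENNReal.tsum_comm
    _ ≤ ∑' j : ℕ, b j * ∑' z : {z : V // dd z ≤ u j}, ENNReal.ofReal (θ z.1) := by
        refine ENNReal.tsum_le_tsum fun j => ?_
        have hsub : {z : V | Nat.find (hu z) = j} ⊆ {z : V | dd z ≤ u j} := by
          intro z hz
          simp only [Set.mem_setOf_eq] at hz ⊢
          rw [← hz]
          exact Nat.find_spec (hu z)
        calc ∑' y : V, Set.indicator {z : V | Nat.find (hu z) = j}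
              (fun z => b j * ENNReal.ofReal (θ z)) y
            ≤ ∑' y : V, Set.indicator {z : V | dd z ≤ u j}
              (fun z => b j * ENNReal.ofReal (θ z)) y :=
              ENNReal.tsum_le_tsum fun y =>
                Set.indicator_le_indicator_of_subset hsub (fun _ => zero_le) y
          _ = ∑' z : {z : V // dd z ≤ u j}, b j * ENNReal.ofReal (θ z.1) :=
              (tsum_subtype _ _).symm
          _ = b j * ∑' z : {z : V // dd z ≤ u j}, ENNReal.ofReal (θ z.1) :=
              ENNReal.tsum_mul_left

set_option maxHeartbeats 1000000 in
/-- Tail estimate for the heat kernel (Lemma 2.1 of the paper, single fixed centre form). -/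
theorem stmt0 (α β : ℝ) (hα : 1 ≤ α) (hβ : 1 < β)
    (c11 c12 c13 c14 c31 c32 N : ℝ)
    (hc11 : 0 < c11) (hc12 : 0 < c12) (hc13 : 0 < c13) (hc14 : 0 < c14)
    (hc31 : 0 < c31) (hc32 : 0 < c32) (hN : 1 ≤ N)
    (V : Type*) [Countable V] (d : V → V → ℝ) (hd : ∀ y z : V, 0 ≤ d y z)
    (θ : V → ℝ) (hθ : ∀ y : V, 0 ≤ θ y) (x : V)
    (q : ℝ → V → ℝ) (hq : ∀ (t : ℝ) (y : V), 0 < t → 0 ≤ q t y)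
    (hvol : ∀ r : ℝ, N ≤ r →
      c31 * r ^ α ≤ (∑' y : {y : V // d x y ≤ r}, θ y.1) ∧
      (∑' y : {y : V // d x y ≤ r}, θ y.1) ≤ c32 * r ^ α)
    (hub1 : ∀ (t : ℝ) (y : V), N ≤ t → d x y ≤ t →
      q t y ≤ c11 / t ^ (α / β) *
        Real.exp (-c12 * (d x y ^ β / t) ^ (1 / (β - 1))))
    (hub2 : ∀ (t : ℝ) (y : V), N ≤ t → t ≤ d x y →
      q t y ≤ c13 * Real.exp (-c14 * d x y * max 1 (Real.log (d x y / t))))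
    (hmass : ∀ t : ℝ, N ≤ t → (∑' y : V, q t y * θ y) ≤ 1) :
    ∀ δ : ℝ, 0 < δ → δ < min c12 c14 →
      ∃ c1 c2 c3 : ℝ, 0 < c1 ∧ 0 < c2 ∧ 0 < c3 ∧
        ∀ r t : ℝ, N ≤ r → N ≤ t →
          (∑' y : {y : V // r ≤ d x y}, q t y.1 * θ y.1) ≤
            c1 * Real.exp (-(c12 - δ) * (r / t ^ (1 / β)) ^ (β / (β - 1))) +
            c2 * Real.exp (-c3 * t) := by
  intro δ hδ0 hδmin
  have hδ12 : δ < c12 := lt_of_lt_of_le hδmin (min_le_left _ _)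
  have hδ14 : δ < c14 := lt_of_lt_of_le hδmin (min_le_right _ _)
  have hβ0 : (0:ℝ) < β := by linarith
  have hβ1 : (0:ℝ) < β - 1 := by linarith
  have hα0 : (0:ℝ) < α := by linarith
  have hN0 : (0:ℝ) < N := by linarith
  have hNα : (0:ℝ) < N ^ α := Real.rpow_pos_of_pos hN0 _
  have h2α : (0:ℝ) < (2:ℝ) ^ α := Real.rpow_pos_of_pos two_pos _
  obtain ⟨K1, hK1one, hK1⟩ := aux_pow_le_exp α (δ/2) hα0.le (by linarith)
  obtain ⟨K2, hK2one, hK2⟩ := aux_pow_le_exp α (c14/4) hα0.le (by linarith)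
  have hK1p : (0:ℝ) < K1 := lt_of_lt_of_le one_pos hK1one
  have hK2p : (0:ℝ) < K2 := lt_of_lt_of_le one_pos hK2one
  set ρ1 := Real.exp (-(δ/4)) with hρ1def
  set ρ2 := Real.exp (-(c14/8)) with hρ2def
  have hρ1pos : 0 < ρ1 := Real.exp_pos _
  have hρ2pos : 0 < ρ2 := Real.exp_pos _
  have hρ1lt : ρ1 < 1 := Real.exp_lt_one_iff.2 (by linarith)
  have hρ2lt : ρ2 < 1 := Real.exp_lt_one_iff.2 (by linarith)
  set A1 := c11 * c32 * N ^ α * ((2:ℝ) ^ α * Real.exp δ * K1 * ρ1) with hA1def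
  set A2 := c13 * c32 * N ^ α * ((2:ℝ) ^ α * K2 * K2 * ρ2) with hA2def
  have hA1pos : 0 < A1 := by
    refine mul_pos (mul_pos (mul_pos hc11 hc32) hNα) ?_
    exact mul_pos (mul_pos (mul_pos h2α (Real.exp_pos _)) hK1p) hρ1pos
  have hA2pos : 0 < A2 := by
    refine mul_pos (mul_pos (mul_pos hc13 hc32) hNα) ?_
    exact mul_pos (mul_pos (mul_pos h2α hK2p) hK2p) hρ2pos
  set c1 := A1 * (1 - ρ1)⁻¹ with hc1def
  set c2 := A2 * (1 - ρ2)⁻¹ with hc2def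
  set c3 := c14 / 4 with hc3def
  have hc1 : 0 < c1 := mul_pos hA1pos (inv_pos.2 (by linarith))
  have hc2 : 0 < c2 := mul_pos hA2pos (inv_pos.2 (by linarith))
  have hc3 : 0 < c3 := by positivity
  refine ⟨c1, c2, c3, hc1, hc2, hc3, ?_⟩
  -- ball volume bound in ℝ≥0∞
  have hball : ∀ R : ℝ, N ≤ R →
      (∑' z : {z : V // d x z ≤ R}, ENNReal.ofReal (θ z.1)) ≤ ENNReal.ofReal (c32 * R ^ α) := by
    intro R hR
    have hR0 : (0:ℝ) < R := by linarith
    have h := hvol R hR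
    have hsum : Summable (fun z : {z : V // d x z ≤ R} => θ z.1) := by
      by_contra hns
      rw [tsum_eq_zero_of_not_summable hns] at h
      have : (0:ℝ) < c31 * R ^ α := mul_pos hc31 (Real.rpow_pos_of_pos hR0 _)
      linarith [h.1]
    rw [← ENNReal.ofReal_tsum_of_nonneg (fun z : {z : V // d x z ≤ R} => hθ z.1) hsum]
    exact ENNReal.ofReal_le_ofReal h.2
  intro r t hr ht
  have ht1 : (1:ℝ) ≤ t := le_trans hN ht
  have ht0 : (0:ℝ) < t := by linarith
  have hr1 : (1:ℝ) ≤ r := le_trans hN hr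
  have hr0 : (0:ℝ) < r := by linarith
  have htb1 : (1:ℝ) ≤ t ^ (1/β) := Real.one_le_rpow ht1 (by positivity)
  have htb0 : (0:ℝ) < t ^ (1/β) := by linarith
  have htab : (0:ℝ) < t ^ (α/β) := Real.rpow_pos_of_pos ht0 _
  have htbβ : (t ^ (1/β)) ^ β = t := by
    rw [← Real.rpow_mul ht0.le, one_div_mul_cancel hβ0.ne', Real.rpow_one]
  set Efac := Real.exp (-(c12 - δ) * (r / t ^ (1 / β)) ^ (β / (β - 1))) with hEdef
  have hEpos : 0 < Efac := Real.exp_pos _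
  set xj : ℕ → ℝ := fun j => (2:ℝ)^j / 2 with hxjdef
  have hxjpos : ∀ j, 0 < xj j := fun j => by positivity
  have h2jpos : ∀ j : ℕ, (0:ℝ) < 2^j := fun j => by positivity
  have hxjge : ∀ j : ℕ, ((j:ℝ)+1)/2 ≤ xj j := by
    intro j
    have h := Nat.lt_two_pow_self (n := j)
    have h' : (j:ℝ) + 1 ≤ (2:ℝ)^j := by exact_mod_cast Nat.succ_le_of_lt h
    simp only [hxjdef]
    linarith
  have h2xj : ∀ j : ℕ, ((2:ℝ)^j) = 2 * xj j := fun j => by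
    simp only [hxjdef]; ring
  have hmm : (r / t ^ (1/β)) ^ (β/(β-1)) = (r ^ β / t) ^ (1/(β-1)) := by
    rw [show β/(β-1) = β * (1/(β-1)) by ring, Real.rpow_mul (by positivity),
      Real.div_rpow hr0.le htb0.le, htbβ]
  -- Part 1 bound
  have hP1 : (∑' y : V, Set.indicator {y : V | r ≤ d x y ∧ d x y ≤ t}
      (fun z => ENNReal.ofReal (q t z * θ z)) y) ≤ ENNReal.ofReal (c1 * Efac) := by
    set u : ℕ → ℝ := fun j => 2^j * (N * t^(1/β)) with hudef
    have huN : ∀ j, N ≤ u j := by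
      intro j
      have h1 : (1:ℝ) ≤ 2^j := one_le_pow₀ one_le_two
      simp only [hudef]
      have h2 : N * 1 ≤ N * t^(1/β) := mul_le_mul_of_nonneg_left htb1 hN0.le
      have h3 : 1 * (N * t^(1/β)) ≤ 2^j * (N * t^(1/β)) :=
        mul_le_mul_of_nonneg_right h1 (by positivity)
      linarith
    have hu : ∀ y : V, ∃ j, d x y ≤ u j := by
      intro y
      obtain ⟨n, hn⟩ := pow_unbounded_of_one_lt (d x y / (N * t^(1/β))) one_lt_two
      refine ⟨n, ?_⟩
      rw [div_lt_iff₀ (by positivity)] at hn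
      simp only [hudef]
      linarith
    set br : ℕ → ℝ := fun j => Efac * (c11 / t^(α/β)) * Real.exp (-δ * (xj j - 1)) with hbrdef
    have hbrpos : ∀ j, 0 ≤ br j := by
      intro j
      simp only [hbrdef]
      positivity
    have hG : ∀ (y : V) (j : ℕ), d x y ≤ u j → (∀ i, i < j → ¬ d x y ≤ u i) →
        Set.indicator {y : V | r ≤ d x y ∧ d x y ≤ t}
          (fun z => ENNReal.ofReal (q t z * θ z)) y
          ≤ ENNReal.ofReal (br j) * ENNReal.ofReal (θ y) := by
      intro y j hj hmin
      by_cases hy : y ∈ {y : V | r ≤ d x y ∧ d x y ≤ t}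
      · rw [Set.indicator_of_mem hy]
        obtain ⟨hyr, hyt⟩ := hy
        have hdy0 : 0 ≤ d x y := hd x y
        -- s := (d^β/t)^(1/(β-1))
        set s := (d x y ^ β / t) ^ (1/(β-1)) with hsdef
        have hs0 : 0 ≤ s := Real.rpow_nonneg (by positivity) _
        -- m' <= s
        have hms : (r / t ^ (1/β)) ^ (β/(β-1)) ≤ s := by
          rw [hmm, hsdef]
          refine Real.rpow_le_rpow (by positivity) ?_ (by positivity)
          gcongr
        -- lower bound on s from minimality of j
        have hsj : xj j - 1 ≤ s := by
          match j with
          | 0 =>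
            have hx0 : xj 0 = 1/2 := by simp [hxjdef]
            rw [hx0]; linarith
          | (k+1) =>
            have hk := hmin k (Nat.lt_succ_self k)
            push_neg at hk
            simp only [hudef] at hk
            have h2k : (0:ℝ) < (2:ℝ)^k := by positivity
            have hdk : (2:ℝ)^k * t^(1/β) ≤ d x y := by
              have h1 : (2:ℝ)^k * (1 * t^(1/β)) ≤ 2^k * (N * t^(1/β)) := by
                apply mul_le_mul_of_nonneg_left _ h2k.le
                exact mul_le_mul_of_nonneg_right hN htb0.le
              linarith
            have hdβ : ((2:ℝ)^k) ^ β * t ≤ d x y ^ β := by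
              calc ((2:ℝ)^k) ^ β * t = ((2:ℝ)^k * t^(1/β)) ^ β := by
                    rw [Real.mul_rpow h2k.le htb0.le, htbβ]
                _ ≤ d x y ^ β := Real.rpow_le_rpow (by positivity) hdk hβ0.le
            have hsge : ((2:ℝ)^k) ^ (β * (1/(β-1))) ≤ s := by
              rw [Real.rpow_mul h2k.le, hsdef]
              apply Real.rpow_le_rpow (Real.rpow_nonneg h2k.le _) _ (by positivity)
              rw [le_div_iff₀ ht0]
              exact hdβ
            have h2k1 : (1:ℝ) ≤ (2:ℝ)^k := one_le_pow₀ one_le_two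
            have hge2 : ((2:ℝ)^k : ℝ) ≤ ((2:ℝ)^k) ^ (β * (1/(β-1))) := by
              nth_rewrite 1 [← Real.rpow_one ((2:ℝ)^k)]
              apply Real.rpow_le_rpow_of_exponent_le h2k1
              rw [show β * (1/(β-1)) = β/(β-1) by ring, le_div_iff₀ hβ1]
              linarith
            have hxjk : xj (k+1) = (2:ℝ)^k := by
              simp only [hxjdef, pow_succ]; ring
            rw [hxjk]; linarith
        -- pointwise bound
        have hqb := hub1 t y ht hyt
        rw [← hsdef] at hqb
        have hexp : Real.exp (-c12 * s) ≤ Efac * Real.exp (-δ * (xj j - 1)) := by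
          rw [hEdef, ← Real.exp_add]
          apply Real.exp_le_exp.2
          have h1 : (c12 - δ) * ((r / t ^ (1/β)) ^ (β/(β-1))) ≤ (c12 - δ) * s :=
            mul_le_mul_of_nonneg_left hms (by linarith)
          have h2 : δ * (xj j - 1) ≤ δ * s := mul_le_mul_of_nonneg_left hsj hδ0.le
          linarith
        have hfin : q t y * θ y ≤ br j * θ y := by
          apply mul_le_mul_of_nonneg_right _ (hθ y)
          calc q t y ≤ c11 / t ^ (α/β) * Real.exp (-c12 * s) := hqb
            _ ≤ c11 / t ^ (α/β) * (Efac * Real.exp (-δ * (xj j - 1))) :=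
                mul_le_mul_of_nonneg_left hexp (by positivity)
            _ = br j := by simp only [hbrdef]; ring
        calc ENNReal.ofReal (q t y * θ y) ≤ ENNReal.ofReal (br j * θ y) :=
              ENNReal.ofReal_le_ofReal hfin
          _ = ENNReal.ofReal (br j) * ENNReal.ofReal (θ y) :=
              ENNReal.ofReal_mul (hbrpos j)
      · rw [Set.indicator_of_notMem hy]
        exact zero_le
    have key := aux_annulus (fun y => d x y) θ u hu
      (Set.indicator {y : V | r ≤ d x y ∧ d x y ≤ t} (fun z => ENNReal.ofReal (q t z * θ z)))
      (fun j => ENNReal.ofReal (br j)) hG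
    refine le_trans key ?_
    have htlb : (t ^ (1/β)) ^ α = t ^ (α/β) := by
      rw [← Real.rpow_mul ht0.le, show (1/β)*α = α/β by ring]
    have perj : ∀ j : ℕ, ENNReal.ofReal (br j) *
        (∑' z : {z : V // d x z ≤ u j}, ENNReal.ofReal (θ z.1))
        ≤ ENNReal.ofReal ((Efac * A1) * ρ1 ^ j) := by
      intro j
      refine le_trans (mul_le_mul_right (hball (u j) (huN j)) _) ?_
      rw [← ENNReal.ofReal_mul (hbrpos j)]
      apply ENNReal.ofReal_le_ofReal
      have hukα : (u j) ^ α = ((2:ℝ)^α * (xj j)^α) * (N ^ α * t^(α/β)) := by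
        simp only [hudef]
        rw [Real.mul_rpow (by positivity) (by positivity),
            Real.mul_rpow hN0.le htb0.le, htlb, h2xj j,
            Real.mul_rpow (by norm_num) (hxjpos j).le]
      rw [hukα]
      simp only [hbrdef]
      have hx1 : (xj j)^α ≤ K1 * Real.exp (δ/2 * xj j) := hK1 _ (hxjpos j).le
      have hx2 : Real.exp (-δ * (xj j - 1)) = Real.exp δ * Real.exp (-δ * xj j) := by
        rw [← Real.exp_add]; ring_nf
      have hx3 : Real.exp (δ/2 * xj j) * Real.exp (-δ * xj j) = Real.exp (-(δ/2) * xj j) := by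
        rw [← Real.exp_add]; ring_nf
      have hx4 : Real.exp (-(δ/2) * xj j) ≤ ρ1 * ρ1 ^ j := by
        rw [hρ1def, ← Real.exp_nat_mul, ← Real.exp_add]
        apply Real.exp_le_exp.2
        have h := mul_le_mul_of_nonneg_left (hxjge j) hδ0.le
        linarith
      have hcore : (xj j)^α * Real.exp (-δ * (xj j - 1)) ≤ Real.exp δ * K1 * (ρ1 * ρ1^j) := by
        calc (xj j)^α * Real.exp (-δ * (xj j - 1))
            = (xj j)^α * (Real.exp δ * Real.exp (-δ * xj j)) := by rw [hx2]
          _ ≤ (K1 * Real.exp (δ/2 * xj j)) * (Real.exp δ * Real.exp (-δ * xj j)) :=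
              mul_le_mul_of_nonneg_right hx1 (by positivity)
          _ = Real.exp δ * K1 * (Real.exp (δ/2 * xj j) * Real.exp (-δ * xj j)) := by ring
          _ = Real.exp δ * K1 * Real.exp (-(δ/2) * xj j) := by rw [hx3]
          _ ≤ Real.exp δ * K1 * (ρ1 * ρ1^j) := by
              apply mul_le_mul_of_nonneg_left hx4 (by positivity)
      calc Efac * (c11 / t^(α/β)) * Real.exp (-δ * (xj j - 1)) *
            (c32 * (((2:ℝ)^α * (xj j)^α) * (N^α * t^(α/β))))
          = (Efac * c11 * c32 * N^α * (2:ℝ)^α) *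
              ((xj j)^α * Real.exp (-δ * (xj j - 1))) := by
            field_simp
        _ ≤ (Efac * c11 * c32 * N^α * (2:ℝ)^α) * (Real.exp δ * K1 * (ρ1 * ρ1^j)) := by
            apply mul_le_mul_of_nonneg_left hcore (by positivity)
        _ = (Efac * A1) * ρ1 ^ j := by rw [hA1def]; ring
    calc ∑' j : ℕ, ENNReal.ofReal (br j) *
          ∑' z : {z : V // d x z ≤ u j}, ENNReal.ofReal (θ z.1)
        ≤ ∑' j : ℕ, ENNReal.ofReal ((Efac * A1) * ρ1 ^ j) := ENNReal.tsum_le_tsum perj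
      _ = ENNReal.ofReal (∑' j : ℕ, (Efac * A1) * ρ1 ^ j) := by
          rw [← ENNReal.ofReal_tsum_of_nonneg (fun j => by positivity)
            ((summable_geometric_of_lt_one hρ1pos.le hρ1lt).mul_left _)]
      _ = ENNReal.ofReal (c1 * Efac) := by
          rw [tsum_mul_left, tsum_geometric_of_lt_one hρ1pos.le hρ1lt, hc1def]
          congr 1; ring
  -- Part 2 bound
  have hP2 : (∑' y : V, Set.indicator {y : V | t ≤ d x y}
      (fun z => ENNReal.ofReal (q t z * θ z)) y) ≤
      ENNReal.ofReal (c2 * Real.exp (-c3 * t)) := by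
    set u : ℕ → ℝ := fun j => 2^j * (N * t) with hudef
    have huN : ∀ j, N ≤ u j := by
      intro j
      have h1 : (1:ℝ) ≤ 2^j := one_le_pow₀ one_le_two
      simp only [hudef]
      have h2 : N * 1 ≤ N * t := mul_le_mul_of_nonneg_left ht1 hN0.le
      have h3 : 1 * (N * t) ≤ 2^j * (N * t) := mul_le_mul_of_nonneg_right h1 (by positivity)
      linarith
    have hu : ∀ y : V, ∃ j, d x y ≤ u j := by
      intro y
      obtain ⟨n, hn⟩ := pow_unbounded_of_one_lt (d x y / (N * t)) one_lt_two
      refine ⟨n, ?_⟩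
      rw [div_lt_iff₀ (by positivity)] at hn
      simp only [hudef]
      linarith
    set br : ℕ → ℝ := fun j => c13 * Real.exp (-c14 * (max (xj j) 1 * t)) with hbrdef
    have hbrpos : ∀ j, 0 ≤ br j := fun j => by simp only [hbrdef]; positivity
    have hG : ∀ (y : V) (j : ℕ), d x y ≤ u j → (∀ i, i < j → ¬ d x y ≤ u i) →
        Set.indicator {y : V | t ≤ d x y} (fun z => ENNReal.ofReal (q t z * θ z)) y
          ≤ ENNReal.ofReal (br j) * ENNReal.ofReal (θ y) := by
      intro y j hj hmin
      by_cases hy : y ∈ {y : V | t ≤ d x y}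
      · rw [Set.indicator_of_mem hy]
        have hyt : t ≤ d x y := hy
        have hdy0 : 0 ≤ d x y := hd x y
        have hdmax : max (xj j) 1 * t ≤ d x y := by
          match j with
          | 0 =>
            have hmx : max (xj 0) 1 = 1 := by
              apply max_eq_right
              simp only [hxjdef]; norm_num
            rw [hmx]; linarith
          | (k+1) =>
            have hk := hmin k (Nat.lt_succ_self k)
            push_neg at hk
            simp only [hudef] at hk
            have hxjk : xj (k+1) = (2:ℝ)^k := by simp only [hxjdef, pow_succ]; ring
            have h2k1 : (1:ℝ) ≤ (2:ℝ)^k := one_le_pow₀ one_le_two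
            have hNt : (2:ℝ)^k * (1 * t) ≤ 2^k * (N * t) := by
              apply mul_le_mul_of_nonneg_left _ (by positivity : (0:ℝ) ≤ 2^k)
              exact mul_le_mul_of_nonneg_right hN ht0.le
            rw [hxjk]
            rcases max_cases ((2:ℝ)^k) 1 with ⟨hmx, _⟩ | ⟨hmx, _⟩ <;> rw [hmx] <;> linarith
        have hqb := hub2 t y ht hyt
        have hML : 1 ≤ max 1 (Real.log (d x y / t)) := le_max_left _ _
        have hq2 : q t y ≤ br j := by
          refine hqb.trans ?_
          simp only [hbrdef]
          apply mul_le_mul_of_nonneg_left _ hc13.le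
          apply Real.exp_le_exp.2
          have hA := mul_le_mul_of_nonneg_left hML (mul_nonneg hc14.le hdy0)
          have hB := mul_le_mul_of_nonneg_left hdmax hc14.le
          linarith (config := { oracle := .fourierMotzkin }) [hA, hB]
        calc ENNReal.ofReal (q t y * θ y) ≤ ENNReal.ofReal (br j * θ y) :=
              ENNReal.ofReal_le_ofReal (mul_le_mul_of_nonneg_right hq2 (hθ y))
          _ = ENNReal.ofReal (br j) * ENNReal.ofReal (θ y) := ENNReal.ofReal_mul (hbrpos j)
      · rw [Set.indicator_of_notMem hy]
        exact zero_le
    have key := aux_annulus (fun y => d x y) θ u hu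
      (Set.indicator {y : V | t ≤ d x y} (fun z => ENNReal.ofReal (q t z * θ z)))
      (fun j => ENNReal.ofReal (br j)) hG
    refine le_trans key ?_
    have htlb2 : t ^ α * Real.exp (-(c14/2) * t) ≤ K2 * Real.exp (-(c14/4) * t) := by
      have h := hK2 t ht0.le
      have hepos : (0:ℝ) < Real.exp (-(c14/2) * t) := Real.exp_pos _
      calc t ^ α * Real.exp (-(c14/2) * t)
          ≤ (K2 * Real.exp (c14/4 * t)) * Real.exp (-(c14/2) * t) :=
            mul_le_mul_of_nonneg_right h hepos.le
        _ = K2 * (Real.exp (c14/4 * t) * Real.exp (-(c14/2) * t)) := by ring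
        _ = K2 * Real.exp (-(c14/4) * t) := by rw [← Real.exp_add]; ring_nf
    have perj : ∀ j : ℕ, ENNReal.ofReal (br j) *
        (∑' z : {z : V // d x z ≤ u j}, ENNReal.ofReal (θ z.1))
        ≤ ENNReal.ofReal ((A2 * Real.exp (-c3 * t)) * ρ2 ^ j) := by
      intro j
      refine le_trans (mul_le_mul_right (hball (u j) (huN j)) _) ?_
      rw [← ENNReal.ofReal_mul (hbrpos j)]
      apply ENNReal.ofReal_le_ofReal
      have hukα : (u j) ^ α = ((2:ℝ)^α * (xj j)^α) * (N ^ α * t ^ α) := by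
        simp only [hudef]
        rw [Real.mul_rpow (by positivity) (by positivity),
            Real.mul_rpow hN0.le ht0.le, h2xj j,
            Real.mul_rpow (by norm_num) (hxjpos j).le]
      rw [hukα]
      simp only [hbrdef]
      have hsplit2 : Real.exp (-c14 * (max (xj j) 1 * t)) ≤
          Real.exp (-(c14/2) * t) * Real.exp (-(c14/2) * xj j) := by
        rw [← Real.exp_add]
        apply Real.exp_le_exp.2
        have h1 : t ≤ max (xj j) 1 * t := le_mul_of_one_le_left ht0.le (le_max_right _ _)
        have h2 : xj j ≤ max (xj j) 1 * t := by
          calc xj j ≤ xj j * t := le_mul_of_one_le_right (hxjpos j).le ht1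
            _ ≤ max (xj j) 1 * t := mul_le_mul_of_nonneg_right (le_max_left _ _) ht0.le
        have hA := mul_le_mul_of_nonneg_left h1 (by positivity : (0:ℝ) ≤ c14/2)
        have hB := mul_le_mul_of_nonneg_left h2 (by positivity : (0:ℝ) ≤ c14/2)
        linarith
      have hx1 : (xj j)^α ≤ K2 * Real.exp (c14/4 * xj j) := hK2 _ (hxjpos j).le
      have hx4 : Real.exp (c14/4 * xj j) * Real.exp (-(c14/2) * xj j) ≤ ρ2 * ρ2 ^ j := by
        rw [← Real.exp_add, hρ2def, ← Real.exp_nat_mul, ← Real.exp_add]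
        apply Real.exp_le_exp.2
        have h := mul_le_mul_of_nonneg_left (hxjge j) hc14.le
        linarith
      have hcore : (xj j)^α * Real.exp (-c14 * (max (xj j) 1 * t)) ≤
          (K2 * (ρ2 * ρ2^j)) * Real.exp (-(c14/2) * t) := by
        calc (xj j)^α * Real.exp (-c14 * (max (xj j) 1 * t))
            ≤ (xj j)^α * (Real.exp (-(c14/2) * t) * Real.exp (-(c14/2) * xj j)) :=
              mul_le_mul_of_nonneg_left hsplit2 (Real.rpow_nonneg (hxjpos j).le _)
          _ ≤ (K2 * Real.exp (c14/4 * xj j)) *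
              (Real.exp (-(c14/2) * t) * Real.exp (-(c14/2) * xj j)) :=
              mul_le_mul_of_nonneg_right hx1 (by positivity)
          _ = K2 * (Real.exp (c14/4 * xj j) * Real.exp (-(c14/2) * xj j)) *
              Real.exp (-(c14/2) * t) := by ring
          _ ≤ K2 * (ρ2 * ρ2^j) * Real.exp (-(c14/2) * t) := by
              apply mul_le_mul_of_nonneg_right _ (Real.exp_pos _).le
              exact mul_le_mul_of_nonneg_left hx4 hK2p.le
      calc c13 * Real.exp (-c14 * (max (xj j) 1 * t)) *
            (c32 * (((2:ℝ)^α * (xj j)^α) * (N^α * t^α)))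
          = (c13 * c32 * N^α * (2:ℝ)^α) *
              (t^α * ((xj j)^α * Real.exp (-c14 * (max (xj j) 1 * t)))) := by ring
        _ ≤ (c13 * c32 * N^α * (2:ℝ)^α) *
              (t^α * ((K2 * (ρ2 * ρ2^j)) * Real.exp (-(c14/2) * t))) := by
            apply mul_le_mul_of_nonneg_left _ (by positivity)
            apply mul_le_mul_of_nonneg_left hcore (Real.rpow_nonneg ht0.le _)
        _ = (K2 * (ρ2 * ρ2^j) * (c13 * c32 * N^α * (2:ℝ)^α)) *
              (t^α * Real.exp (-(c14/2) * t)) := by ring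
        _ ≤ (K2 * (ρ2 * ρ2^j) * (c13 * c32 * N^α * (2:ℝ)^α)) *
              (K2 * Real.exp (-(c14/4) * t)) := by
            apply mul_le_mul_of_nonneg_left htlb2 ?_
            have : (0:ℝ) ≤ ρ2 * ρ2^j := by positivity
            positivity
        _ = (A2 * Real.exp (-c3 * t)) * ρ2 ^ j := by
            rw [hA2def, hc3def]; ring
    calc ∑' j : ℕ, ENNReal.ofReal (br j) *
          ∑' z : {z : V // d x z ≤ u j}, ENNReal.ofReal (θ z.1)
        ≤ ∑' j : ℕ, ENNReal.ofReal ((A2 * Real.exp (-c3 * t)) * ρ2 ^ j) :=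
          ENNReal.tsum_le_tsum perj
      _ = ENNReal.ofReal (∑' j : ℕ, (A2 * Real.exp (-c3 * t)) * ρ2 ^ j) := by
          rw [← ENNReal.ofReal_tsum_of_nonneg (fun j => by positivity)
            ((summable_geometric_of_lt_one hρ2pos.le hρ2lt).mul_left _)]
      _ = ENNReal.ofReal (c2 * Real.exp (-c3 * t)) := by
          rw [tsum_mul_left, tsum_geometric_of_lt_one hρ2pos.le hρ2lt, hc2def]
          congr 1; ring
  -- splitting of the tail sum
  have hsplit : (∑' y : {y : V // r ≤ d x y}, ENNReal.ofReal (q t y.1 * θ y.1)) ≤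
      (∑' y : V, Set.indicator {y : V | r ≤ d x y ∧ d x y ≤ t}
        (fun z => ENNReal.ofReal (q t z * θ z)) y) +
      (∑' y : V, Set.indicator {y : V | t ≤ d x y}
        (fun z => ENNReal.ofReal (q t z * θ z)) y) := by
    have h0 : (∑' y : {y : V // r ≤ d x y}, ENNReal.ofReal (q t y.1 * θ y.1)) =
        ∑' y : V, Set.indicator {y : V | r ≤ d x y}
          (fun z => ENNReal.ofReal (q t z * θ z)) y := tsum_subtype {y : V | r ≤ d x y} (fun z => ENNReal.ofReal (q t z * θ z))
    rw [h0, ← ENNReal.tsum_add]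
    refine ENNReal.tsum_le_tsum fun y => ?_
    by_cases hy : r ≤ d x y
    · rcases le_total (d x y) t with hc | hc
      · rw [Set.indicator_of_mem (show y ∈ {y : V | r ≤ d x y} from hy),
            Set.indicator_of_mem (show y ∈ {y : V | r ≤ d x y ∧ d x y ≤ t} from ⟨hy, hc⟩)]
        exact le_self_add
      · rw [Set.indicator_of_mem (show y ∈ {y : V | r ≤ d x y} from hy),
            Set.indicator_of_mem (show y ∈ {y : V | t ≤ d x y} from hc)]
        exact le_add_self
    · rw [Set.indicator_of_notMem (show y ∉ {y : V | r ≤ d x y} from hy)]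
      exact zero_le
  have hRHS0 : 0 ≤ c1 * Efac + c2 * Real.exp (-c3 * t) :=
    add_nonneg (mul_nonneg hc1.le hEpos.le) (mul_nonneg hc2.le (Real.exp_pos _).le)
  have EL : (∑' y : {y : V // r ≤ d x y}, ENNReal.ofReal (q t y.1 * θ y.1)) ≤
      ENNReal.ofReal (c1 * Efac + c2 * Real.exp (-c3 * t)) := by
    rw [ENNReal.ofReal_add (mul_nonneg hc1.le hEpos.le) (mul_nonneg hc2.le (Real.exp_pos _).le)]
    exact hsplit.trans (add_le_add hP1 hP2)
  by_cases hs : Summable (fun y : {y : V // r ≤ d x y} => q t y.1 * θ y.1)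
  · have heq := ENNReal.ofReal_tsum_of_nonneg (fun y : {y : V // r ≤ d x y} =>
      mul_nonneg (hq t y.1 ht0) (hθ y.1)) hs
    rw [← heq] at EL
    exact (ENNReal.ofReal_le_ofReal_iff hRHS0).1 EL
  · rw [tsum_eq_zero_of_not_summable hs]
    exact hRHS0
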